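/- Let f : ℝ → ℝ and x₀ ∈ ℝ, and suppose the difference quotient x ↦ (f(x) − f(x₀))/(x − x₀) tends to +∞ (the filter atTop) as x → x₀ along the punctured neighborhood filter 𝓝[≠] x₀. Then the unit secant vectors x ↦ ‖(x − x₀, f(x) − f(x₀))‖⁻¹ • (x − x₀, f(x) − f(x₀)) tend to (0, 1) along 𝓝[>] x₀ and tend to (0, −1) along 𝓝[<] x₀; in particular the graph of f has a vertical tangent at (x₀, f(x₀)). -/

import Mathlib

open Filter Topology

/-- The plane `ℝ × ℝ` equipped with the Euclidean norm. -/
noncomputable abbrev EuclideanPlane := WithLp 2 (ℝ × ℝ)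

/-- A point of the Euclidean plane with the given coordinates. -/
noncomputable def planePt (x y : ℝ) : EuclideanPlane := (WithLp.equiv 2 (ℝ × ℝ)).symm (x, y)

lemma planePt_norm (a b : ℝ) : ‖planePt a b‖ = Real.sqrt (a ^ 2 + b ^ 2) := by
  rw [WithLp.prod_norm_eq_of_L2]
  simp [planePt, Real.norm_eq_abs, sq_abs]

lemma planePt_smul (r a b : ℝ) : r • planePt a b = planePt (r * a) (r * b) := rfl

lemma planePt_cont : Continuous fun p : ℝ × ℝ => planePt p.1 p.2 :=
  (WithLp.prodContinuousLinearEquiv 2 ℝ ℝ ℝ).symm.continuous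

lemma sqrt_ne (q : ℝ) : Real.sqrt (1 + q ^ 2) ≠ 0 := by
  positivity

lemma tendsto_sq_sqrt : Tendsto (fun q : ℝ => Real.sqrt (1 + q ^ 2)) atTop atTop := by
  have h1 : Tendsto (fun q : ℝ => 1 + q ^ 2) atTop atTop :=
    tendsto_atTop_add_const_left _ _ (tendsto_pow_atTop two_ne_zero)
  have h2 : Tendsto Real.sqrt atTop atTop := by
    have := tendsto_rpow_atTop (by norm_num : (0:ℝ) < 1/2)
    exact this.congr fun x => (Real.sqrt_eq_rpow x).symm
  exact h2.comp h1

lemma tendsto_inv_sqrt : Tendsto (fun q : ℝ => (Real.sqrt (1 + q ^ 2))⁻¹) atTop (𝓝 0) :=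
  tendsto_sq_sqrt.inv_tendsto_atTop

lemma tendsto_q_div : Tendsto (fun q : ℝ => q * (Real.sqrt (1 + q ^ 2))⁻¹) atTop (𝓝 1) := by
  have h1 : Tendsto (fun q : ℝ => Real.sqrt (1 - (1 + q ^ 2)⁻¹)) atTop (𝓝 1) := by
    have h0 : Tendsto (fun q : ℝ => 1 - (1 + q ^ 2)⁻¹) atTop (𝓝 1) := by
      have := (tendsto_atTop_add_const_left atTop (1:ℝ)
        (tendsto_pow_atTop two_ne_zero)).inv_tendsto_atTop
      simpa using (tendsto_const_nhds.sub this)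
    have := (Real.continuous_sqrt.continuousAt (x := (1:ℝ))).tendsto.comp h0
    simpa [Function.comp_def] using this
  apply h1.congr'
  filter_upwards [eventually_gt_atTop 0] with q hq
  have hpos : (0:ℝ) < 1 + q ^ 2 := by positivity
  rw [show 1 - (1 + q ^ 2)⁻¹ = q ^ 2 / (1 + q ^ 2) by field_simp; ring,
    Real.sqrt_div (by positivity), Real.sqrt_sq hq.le, div_eq_mul_inv]

theorem graph_vertical_tangent_of_diff_quotient_atTop (f : ℝ → ℝ) (x₀ : ℝ)
    (h : Tendsto (fun x => (f x - f x₀) / (x - x₀)) (𝓝[≠] x₀) atTop) :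
    Tendsto (fun x => ‖planePt (x - x₀) (f x - f x₀)‖⁻¹ • planePt (x - x₀) (f x - f x₀))
      (𝓝[>] x₀) (𝓝 (planePt 0 1)) ∧
    Tendsto (fun x => ‖planePt (x - x₀) (f x - f x₀)‖⁻¹ • planePt (x - x₀) (f x - f x₀))
      (𝓝[<] x₀) (𝓝 (planePt 0 (-1))) := by
  set q : ℝ → ℝ := fun x => (f x - f x₀) / (x - x₀) with hq
  constructor
  · have hq' : Tendsto q (𝓝[>] x₀) atTop :=
      h.mono_left (nhdsWithin_mono _ (fun x hx => ne_of_gt hx))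
    have hF : Tendsto (fun s : ℝ => planePt (Real.sqrt (1 + s ^ 2))⁻¹
        (s * (Real.sqrt (1 + s ^ 2))⁻¹)) atTop (𝓝 (planePt 0 1)) := by
      have hc : ContinuousAt (fun p : ℝ × ℝ => planePt p.1 p.2) ((0:ℝ), (1:ℝ)) :=
        planePt_cont.continuousAt
      have := hc.tendsto.comp (tendsto_inv_sqrt.prodMk_nhds tendsto_q_div)
      simpa [Function.comp_def] using this
    apply (hF.comp hq').congr'
    filter_upwards [self_mem_nhdsWithin] with x (hx : x₀ < x)
    have hd : (0:ℝ) < x - x₀ := by linarith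
    have hfy : f x - f x₀ = q x * (x - x₀) := (div_mul_cancel₀ _ hd.ne').symm
    have hnorm : ‖planePt (x - x₀) (f x - f x₀)‖
        = (x - x₀) * Real.sqrt (1 + q x ^ 2) := by
      have hnn : (0:ℝ) ≤ 1 + q x ^ 2 := by positivity
      rw [planePt_norm, hfy, show (x - x₀) ^ 2 + (q x * (x - x₀)) ^ 2
          = ((x - x₀) * Real.sqrt (1 + q x ^ 2)) ^ 2 by
        rw [mul_pow, mul_pow, Real.sq_sqrt hnn]; ring,
        Real.sqrt_sq (by positivity)]
    rw [Function.comp_apply, hnorm, hfy, planePt_smul]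
    congr 1 <;> field_simp <;> ring
  · have hq' : Tendsto q (𝓝[<] x₀) atTop :=
      h.mono_left (nhdsWithin_mono _ (fun x hx => ne_of_lt hx))
    have hF : Tendsto (fun s : ℝ => planePt (-(Real.sqrt (1 + s ^ 2))⁻¹)
        (-(s * (Real.sqrt (1 + s ^ 2))⁻¹))) atTop (𝓝 (planePt 0 (-1))) := by
      have hc : ContinuousAt (fun p : ℝ × ℝ => planePt p.1 p.2) ((0:ℝ), (-1:ℝ)) :=
        planePt_cont.continuousAt
      have hn : Tendsto (fun q : ℝ => -(Real.sqrt (1 + q ^ 2))⁻¹) atTop (𝓝 0) := by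
        simpa using tendsto_inv_sqrt.neg
      have := hc.tendsto.comp (hn.prodMk_nhds tendsto_q_div.neg)
      simpa [Function.comp_def] using this
    apply (hF.comp hq').congr'
    filter_upwards [self_mem_nhdsWithin] with x (hx : x < x₀)
    have hd : x - x₀ < 0 := by linarith
    have hd' : x - x₀ ≠ 0 := hd.ne
    have hfy : f x - f x₀ = q x * (x - x₀) := (div_mul_cancel₀ _ hd').symm
    have hnorm : ‖planePt (x - x₀) (f x - f x₀)‖
        = (x₀ - x) * Real.sqrt (1 + q x ^ 2) := by
      have hnn : (0:ℝ) ≤ 1 + q x ^ 2 := by positivity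
      rw [planePt_norm, hfy, show (x - x₀) ^ 2 + (q x * (x - x₀)) ^ 2
          = ((x₀ - x) * Real.sqrt (1 + q x ^ 2)) ^ 2 by
        rw [mul_pow, mul_pow, Real.sq_sqrt hnn]; ring,
        Real.sqrt_sq (mul_nonneg (by linarith) (Real.sqrt_nonneg _))]
    rw [Function.comp_apply, hnorm, hfy, planePt_smul]
    have hxx : x₀ - x ≠ 0 := by linarith
    congr 1 <;> field_simp <;> ring
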